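/- Let α ∈ (0, 1/2], set β = (1/2) log(1/α), and assume β ≥ 4 and log(1/α) ≥ β. Let p = 1 − α. Then the KL divergence γ = KL(Ber(1/β) ∥ Ber(p)) satisfies (1 − 2/β)·log(1/α) ≤ γ ≤ (1 − 1/β)·log(1/α). -/
import Mathlib


open Real

/-- Bounds on `γ = KL(Ber (1/β) ∥ Ber p)` for `p = 1 - α`, `β = log(1/α)/2`. -/
theorem kl_ber_inv_beta_bounds (α : ℝ) (hα : α ∈ Set.Ioc (0 : ℝ) (1 / 2))
    (β : ℝ) (hβ : β = Real.log (1 / α) / 2) (hβ4 : 4 ≤ β)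
    (hlogβ : β ≤ Real.log (1 / α))
    (p : ℝ) (hp : p = 1 - α) :
    (1 - 2 / β) * Real.log (1 / α)
        ≤ (1 / β) * Real.log ((1 / β) / p)
            + (1 - 1 / β) * Real.log ((1 - 1 / β) / (1 - p)) ∧
    (1 / β) * Real.log ((1 / β) / p)
        + (1 - 1 / β) * Real.log ((1 - 1 / β) / (1 - p))
      ≤ (1 - 1 / β) * Real.log (1 / α) := by
  obtain ⟨hα0, hα2⟩ := hα
  have hβ0 : (0:ℝ) < β := by linarith
  have hL : Real.log (1 / α) = 2 * β := by rw [hβ]; ring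
  have hp0 : 0 < p := by rw [hp]; linarith
  have hp1 : p < 1 := by rw [hp]; linarith
  have hph : 1/2 ≤ p := by rw [hp]; linarith
  have h1p : 1 - p = α := by rw [hp]; ring
  have hb1 : 1/β ≤ 1/4 := by
    rw [div_le_div_iff₀ hβ0 (by norm_num)]; linarith
  have h1b0 : 0 < 1 - 1/β := by linarith
  have e1 : Real.log ((1/β)/p) = -Real.log β - Real.log p := by
    rw [Real.log_div (by positivity) (ne_of_gt hp0),
        Real.log_div one_ne_zero (ne_of_gt hβ0), Real.log_one]
    ring
  have e2 : Real.log ((1 - 1/β)/(1-p)) = Real.log (1 - 1/β) + Real.log (1/α) := by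
    rw [h1p, Real.log_div (ne_of_gt h1b0) (ne_of_gt hα0),
        Real.log_div one_ne_zero (ne_of_gt hα0), Real.log_one]
    ring
  have hlogp_le : Real.log p ≤ 0 := Real.log_nonpos (le_of_lt hp0) (le_of_lt hp1)
  have hlogp_ge : -Real.log 2 ≤ Real.log p := by
    have h := Real.log_le_log (by norm_num : (0:ℝ) < 1/2) hph
    rwa [Real.log_div one_ne_zero two_ne_zero, Real.log_one, zero_sub] at h
  have hlogβ2 : Real.log 2 ≤ Real.log β := Real.log_le_log (by norm_num) (by linarith)
  have hlogβub : Real.log β ≤ β - 1 := Real.log_le_sub_one_of_pos hβ0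
  have hbpos : (0:ℝ) ≤ 1/β := by positivity
  have hlog1b_le : Real.log (1 - 1/β) ≤ 0 := Real.log_nonpos (le_of_lt h1b0) (by linarith)
  have key : -(1/β) ≤ (1 - 1/β) * Real.log (1 - 1/β) := by
    have h := Real.log_le_sub_one_of_pos (show (0:ℝ) < (1 - 1/β)⁻¹ by positivity)
    rw [Real.log_inv] at h
    have h3 : (1 - 1/β) * (1 - (1 - 1/β)⁻¹) = -(1/β) := by
      rw [mul_sub, mul_inv_cancel₀ (ne_of_gt h1b0)]; ring
    nlinarith [h1b0]
  have hbinv : β * (1/β) = 1 := by field_simp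
  constructor
  · rw [e1, e2, hL]
    have t1 : (1/β) * Real.log β ≤ (1/β) * (β - 1) :=
      mul_le_mul_of_nonneg_left hlogβub hbpos
    have t2 : (1/β) * (β - 1) = 1 - 1/β := by field_simp
    have t3 : 0 ≤ (1/β) * (-Real.log p) := mul_nonneg hbpos (by linarith)
    have ex : (1 - 2/β) * (2*β) = 2*β - 4 := by field_simp; ring
    have ex3 : (1 - 1/β) * (Real.log (1 - 1/β) + 2*β)
        = (1 - 1/β) * Real.log (1 - 1/β) + 2*β - 2 := by field_simp; ring
    linarith [t1, t2, t3, key, hb1, ex, ex3]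
  · rw [e1, e2, hL]
    nlinarith [mul_nonneg (le_of_lt (show (0:ℝ) < 1/β by positivity)) (sub_nonneg.mpr hlogβ2), mul_nonneg (le_of_lt h1b0) (neg_nonneg.mpr hlog1b_le)]
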